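/- arXiv:1904.07322 — 2 statements merged into one kernel-verified Lean document; each statement's English description precedes it below -/
import Mathlib

section
/- Let A be an abelian category with enough projectives. The assignments T ↦ ({X ∈ ⊥₁T : pd X ≤ 1}, Fac T, T⊥) and (C, T, F) ↦ C ∩ T are mutually inverse bijections between tilting subcategories of A and cotorsion torsion triples in A. -/
open CategoryTheory Category Limits

attribute [local instance] CategoryTheory.Abelian.hasFiniteBiproducts
attribute [local instance] CategoryTheory.Limits.HasFiniteBiproducts.of_hasFiniteProducts

universe w v u

namespace Paper

variable {A : Type u} [Category.{v} A] [Abelian A]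

/-- `IsSes i p` expresses that `0 ⟶ X ⟶ Y ⟶ Z ⟶ 0` is a short exact sequence. -/
def IsSes {X Y Z : A} (i : X ⟶ Y) (p : Y ⟶ Z) : Prop :=
  ∃ w : i ≫ p = 0, (ShortComplex.mk i p w).ShortExact

/-- `Ext¹(X, Y) = 0`, phrased as: every extension of `X` by `Y` splits. -/
def Ext1Zero (X Y : A) : Prop :=
  ∀ ⦃E : A⦄ (i : Y ⟶ E) (p : E ⟶ X), IsSes i p → ∃ s : X ⟶ E, s ≫ p = 𝟙 X

/-- A torsion pair `(T, F)` of (strictly full) subcategories of an abelian category. -/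
structure IsTorsionPair (T F : Set A) : Prop where
  isoClosed_torsion : ∀ {X Y : A}, (X ≅ Y) → X ∈ T → Y ∈ T
  isoClosed_torsionFree : ∀ {X Y : A}, (X ≅ Y) → X ∈ F → Y ∈ F
  hom_zero : ∀ {X Y : A}, X ∈ T → Y ∈ F → ∀ f : X ⟶ Y, f = 0
  seq : ∀ X : A, ∃ (tX fX : A) (i : tX ⟶ X) (p : X ⟶ fX), tX ∈ T ∧ fX ∈ F ∧ IsSes i p

/-- A (complete) cotorsion pair `(C, D)` in an abelian category. -/
structure IsCotorsionPair (C D : Set A) : Prop where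
  left_eq : C = {X : A | ∀ Y ∈ D, Ext1Zero X Y}
  right_eq : D = {Y : A | ∀ X ∈ C, Ext1Zero X Y}
  seq₁ : ∀ X : A, ∃ (dX cX : A) (i : dX ⟶ cX) (p : cX ⟶ X), dX ∈ D ∧ cX ∈ C ∧ IsSes i p
  seq₂ : ∀ X : A, ∃ (dX cX : A) (i : X ⟶ dX) (p : dX ⟶ cX), dX ∈ D ∧ cX ∈ C ∧ IsSes i p

/-- `f` factors through some object belonging to the class `P`. -/
def FactorsThroughClass (P : Set A) {X Y : A} (f : X ⟶ Y) : Prop :=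
  ∃ (Z : A) (_ : Z ∈ P) (a : X ⟶ Z) (b : Z ⟶ Y), a ≫ b = f

/-- The hom-relation on the full subcategory on `S` identifying two morphisms whose
difference factors through an object of `P`. -/
def quotRel (S P : Set A) : HomRel (ObjectProperty.FullSubcategory (· ∈ S)) :=
  fun {X Y} f g =>
    FactorsThroughClass P ((show X.obj ⟶ Y.obj from f.hom) - (show X.obj ⟶ Y.obj from g.hom))

/-- The additive quotient of the full subcategory on `S` by the morphisms factoring
through objects of `P`. -/
abbrev AddQuot (S P : Set A) := CategoryTheory.Quotient (quotRel S P)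

/-- The subcategory of quotients of (finite direct sums of) objects of `T`. -/
def Fac (T : Set A) : Set A := {X : A | ∃ Y ∈ T, ∃ p : Y ⟶ X, Epi p}

/-- The right `Hom`-orthogonal `T^⊥`. -/
def rightHomPerp (T : Set A) : Set A := {X : A | ∀ Y ∈ T, ∀ f : Y ⟶ X, f = 0}

/-- The left `Hom`-orthogonal `^⊥F`. -/
def leftHomPerp (F : Set A) : Set A := {X : A | ∀ Y ∈ F, ∀ f : X ⟶ Y, f = 0}

/-- The right `Ext¹`-orthogonal `T^{⊥₁}`. -/
def rightExt1Perp (T : Set A) : Set A := {X : A | ∀ Y ∈ T, Ext1Zero Y X}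

/-- The left `Ext¹`-orthogonal `^{⊥₁}D`. -/
def leftExt1Perp (D : Set A) : Set A := {X : A | ∀ Y ∈ D, Ext1Zero X Y}

/-- `X` has projective dimension at most one: it has a length-one projective resolution. -/
def PdLeOne (X : A) : Prop :=
  ∃ (P₁ P₀ : A) (i : P₁ ⟶ P₀) (p : P₀ ⟶ X), Projective P₁ ∧ Projective P₀ ∧ IsSes i p

/-- A weak tilting subcategory of an abelian category with enough projectives. -/
structure IsWeakTilting (T : Set A) : Prop where
  sum_mem : ∀ {X Y : A}, X ∈ T → Y ∈ T → (X ⊞ Y) ∈ T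
  summand_mem : ∀ {X Y : A}, X ∈ T → (∃ (s : Y ⟶ X) (r : X ⟶ Y), s ≫ r = 𝟙 Y) → Y ∈ T
  ext1_zero : ∀ {X Y : A}, X ∈ T → Y ∈ T → Ext1Zero X Y
  pd_le_one : ∀ X ∈ T, PdLeOne X
  coresolution : ∀ P : A, Projective P → ∃ (T₀ T₁ : A) (i : P ⟶ T₀) (p : T₀ ⟶ T₁),
    T₀ ∈ T ∧ T₁ ∈ T ∧ IsSes i p

/-- `φ : X ⟶ E` is a right `T`-approximation of `E`. -/
def IsRightApprox (T : Set A) {X E : A} (φ : X ⟶ E) : Prop :=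
  X ∈ T ∧ ∀ X' ∈ T, ∀ f : X' ⟶ E, ∃ g : X' ⟶ X, g ≫ φ = f

/-- A tilting subcategory: a weak tilting subcategory that is contravariantly finite. -/
structure IsTilting (T : Set A) extends IsWeakTilting T : Prop where
  contravariantly_finite : ∀ E : A, ∃ (X : A) (φ : X ⟶ E), IsRightApprox T φ


namespace IsSes

variable {X Y Z : A} {i : X ⟶ Y} {p : Y ⟶ Z}

lemma w (h : IsSes i p) : i ≫ p = 0 := h.1

lemma mono (h : IsSes i p) : Mono i := h.2.mono_f

lemma epi (h : IsSes i p) : Epi p := h.2.epi_g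

lemma lift (h : IsSes i p) {W : A} (k : W ⟶ Y) (hk : k ≫ p = 0) :
    ∃ l : W ⟶ X, l ≫ i = k := by
  have := h.2.mono_f
  exact h.2.exact.lift' k hk

lemma desc (h : IsSes i p) {W : A} (k : Y ⟶ W) (hk : i ≫ k = 0) :
    ∃ l : Z ⟶ W, p ≫ l = k := by
  have := h.2.epi_g
  exact h.2.exact.desc' k hk

end IsSes

/-- Builder from kernel property. -/
lemma isSes_of_ker {X Y Z : A} {i : X ⟶ Y} {p : Y ⟶ Z} (hp : Epi p) (hw : i ≫ p = 0)
    (hker : ∀ {W : A} (k : W ⟶ Y), k ≫ p = 0 → ∃ l : W ⟶ X, l ≫ i = k)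
    (hmono : Mono i) : IsSes i p := by
  refine ⟨hw, ?_⟩
  have : Mono (ShortComplex.mk i p hw).f := hmono
  have : Epi (ShortComplex.mk i p hw).g := hp
  refine ShortComplex.ShortExact.mk ?_
  apply ShortComplex.exact_of_f_is_kernel
  refine KernelFork.IsLimit.ofι i hw (fun k hk => Classical.choose (hker k hk))
    (fun k hk => Classical.choose_spec (hker k hk)) ?_
  intro W k hk m hm
  have h2 := Classical.choose_spec (hker k hk)
  rw [← h2] at hm
  exact (cancel_mono i).1 hm

/-- Builder from cokernel property. -/
lemma isSes_of_coker {X Y Z : A} {i : X ⟶ Y} {p : Y ⟶ Z} (hi : Mono i) (hw : i ≫ p = 0)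
    (hcoker : ∀ {W : A} (k : Y ⟶ W), i ≫ k = 0 → ∃ l : Z ⟶ W, p ≫ l = k)
    (hepi : Epi p) : IsSes i p := by
  refine ⟨hw, ?_⟩
  have : Mono (ShortComplex.mk i p hw).f := hi
  have : Epi (ShortComplex.mk i p hw).g := hepi
  refine ShortComplex.ShortExact.mk ?_
  apply ShortComplex.exact_of_g_is_cokernel
  refine CokernelCofork.IsColimit.ofπ p hw (fun k hk => Classical.choose (hcoker k hk))
    (fun k hk => Classical.choose_spec (hcoker k hk)) ?_
  intro W k hk m hm
  have h2 := Classical.choose_spec (hcoker k hk)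
  rw [← h2] at hm
  exact (cancel_epi p).1 hm

lemma isSes_kernel {Y Z : A} (p : Y ⟶ Z) [Epi p] : IsSes (kernel.ι p) p := by
  refine isSes_of_ker inferInstance (kernel.condition p) ?_ inferInstance
  intro W k hk
  exact ⟨kernel.lift p k hk, kernel.lift_ι p k hk⟩

lemma isSes_cokernel {X Y : A} (i : X ⟶ Y) [Mono i] : IsSes i (cokernel.π i) := by
  refine isSes_of_coker inferInstance (cokernel.condition i) ?_ inferInstance
  intro W k hk
  exact ⟨cokernel.desc i k hk, cokernel.π_desc i k hk⟩

/-- From a retraction of the mono, get a section of the epi. -/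
lemma IsSes.section_of_retraction {X Y Z : A} {i : X ⟶ Y} {p : Y ⟶ Z} (h : IsSes i p)
    (r : Y ⟶ X) (hr : i ≫ r = 𝟙 X) : ∃ s : Z ⟶ Y, s ≫ p = 𝟙 Z := by
  have hd : i ≫ (𝟙 Y - r ≫ i) = 0 := by
    simp [Preadditive.comp_sub, reassoc_of% hr]
  obtain ⟨s, hs⟩ := h.desc (𝟙 Y - r ≫ i) hd
  refine ⟨s, ?_⟩
  have := h.epi
  have : p ≫ s ≫ p = p ≫ 𝟙 Z := by
    rw [← assoc, hs]
    simp [Preadditive.sub_comp, assoc, h.w]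
  exact (cancel_epi p).1 this

/-- From a section of the epi, get a retraction of the mono. -/
lemma IsSes.retraction_of_section {X Y Z : A} {i : X ⟶ Y} {p : Y ⟶ Z} (h : IsSes i p)
    (s : Z ⟶ Y) (hs : s ≫ p = 𝟙 Z) : ∃ r : Y ⟶ X, i ≫ r = 𝟙 X := by
  have hd : (𝟙 Y - p ≫ s) ≫ p = 0 := by
    simp [Preadditive.sub_comp, assoc, hs]
  obtain ⟨r, hr⟩ := h.lift (𝟙 Y - p ≫ s) hd
  refine ⟨r, ?_⟩
  have := h.mono
  have : (i ≫ r) ≫ i = 𝟙 X ≫ i := by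
    rw [assoc, hr]
    simp [Preadditive.comp_sub, reassoc_of% h.w]
  exact (cancel_mono i).1 this


section PullbackPushout

variable {X Y Z : A} {i : X ⟶ Y} {p : Y ⟶ Z}

/-- D3a: pullback of a ses along `f : Z' ⟶ Z`. -/
lemma isSes_pullback (h : IsSes i p) {Z' : A} (f : Z' ⟶ Z) :
    IsSes (pullback.lift i 0 (by simp [h.w]) : X ⟶ pullback p f) (pullback.snd p f) := by
  have := h.epi
  have hepi : Epi (pullback.snd p f) := Abelian.epi_pullback_of_epi_f p f
  have hm : Mono (pullback.lift i 0 (by simp [h.w]) : X ⟶ pullback p f) := by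
    have := h.mono
    have : (pullback.lift i 0 (by simp [h.w]) : X ⟶ pullback p f) ≫ pullback.fst p f = i :=
      pullback.lift_fst _ _ _
    exact mono_of_mono_fac this
  refine isSes_of_ker hepi (pullback.lift_snd _ _ _) ?_ hm
  intro W k hk
  obtain ⟨l, hl⟩ := h.lift (k ≫ pullback.fst p f)
    (by rw [assoc, pullback.condition, ← assoc, hk, zero_comp])
  refine ⟨l, ?_⟩
  apply pullback.hom_ext
  · rw [assoc, pullback.lift_fst, hl]
  · rw [assoc, pullback.lift_snd, comp_zero, hk]

/-- D3b: for a ses `K ⟶ Z' ⟶ Z` and a ses `X ⟶ Y ⟶ Z`,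
the pullback gives a ses `K ⟶ PB ⟶ Y`. -/
lemma isSes_pullback' (h : IsSes i p) {K Z' : A} {k : K ⟶ Z'} {f : Z' ⟶ Z}
    (hk : IsSes k f) :
    IsSes (pullback.lift 0 k (by simp [hk.w]) : K ⟶ pullback p f) (pullback.fst p f) := by
  have := hk.epi
  have hepi : Epi (pullback.fst p f) := Abelian.epi_pullback_of_epi_g p f
  have hm : Mono (pullback.lift 0 k (by simp [hk.w]) : K ⟶ pullback p f) := by
    have := hk.mono
    have : (pullback.lift 0 k (by simp [hk.w]) : K ⟶ pullback p f) ≫ pullback.snd p f = k :=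
      pullback.lift_snd _ _ _
    exact mono_of_mono_fac this
  refine isSes_of_ker hepi (pullback.lift_fst _ _ _) ?_ hm
  intro W m hm'
  obtain ⟨l, hl⟩ := hk.lift (m ≫ pullback.snd p f)
    (by rw [assoc, ← pullback.condition, ← assoc, hm', zero_comp])
  refine ⟨l, ?_⟩
  apply pullback.hom_ext
  · rw [assoc, pullback.lift_fst, comp_zero, hm']
  · rw [assoc, pullback.lift_snd, hl]

/-- D3c: given ses `X ⟶ Y ⟶ Z` and ses `Z' ⟶ Z ⟶ Z''`, we get a
ses `pullback ⟶ Y ⟶ Z''`. -/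
lemma isSes_pullback_fst (h : IsSes i p) {Z' Z'' : A} {f : Z' ⟶ Z} {c : Z ⟶ Z''}
    (hf : IsSes f c) : IsSes (pullback.fst p f) (p ≫ c) := by
  have := h.epi
  have := hf.epi
  have := hf.mono
  have hepi : Epi (p ≫ c) := epi_comp p c
  refine isSes_of_ker hepi (by rw [pullback.condition_assoc, hf.w, comp_zero]) ?_
    inferInstance
  intro W m hm'
  obtain ⟨l, hl⟩ := hf.lift (m ≫ p) (by rwa [assoc])
  exact ⟨pullback.lift m l hl.symm, pullback.lift_fst _ _ _⟩

/-- D4a: pushout of a ses along `f : X ⟶ X'`. -/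
lemma isSes_pushout (h : IsSes i p) {X' : A} (f : X ⟶ X') :
    IsSes (pushout.inl f i) (pushout.desc 0 p (by simp [h.w]) : pushout f i ⟶ Z) := by
  have := h.mono
  have hm : Mono (pushout.inl f i) := Abelian.mono_pushout_of_mono_g f i
  have hepi : Epi (pushout.desc 0 p (by simp [h.w]) : pushout f i ⟶ Z) := by
    have := h.epi
    have : pushout.inr f i ≫ (pushout.desc 0 p (by simp [h.w]) : pushout f i ⟶ Z) = p :=
      pushout.inr_desc _ _ _
    exact epi_of_epi_fac this
  refine isSes_of_coker hm (pushout.inl_desc _ _ _) ?_ hepi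
  intro W k hk
  obtain ⟨l, hl⟩ := h.desc (pushout.inr f i ≫ k)
    (by rw [← assoc, ← pushout.condition, assoc, hk, comp_zero])
  refine ⟨l, ?_⟩
  apply pushout.hom_ext
  · rw [pushout.inl_desc_assoc, zero_comp, hk]
  · rw [pushout.inr_desc_assoc, hl]

/-- D4b: for a ses `X ⟶ X' ⟶ C''` and a ses `X ⟶ Y ⟶ Z`, the pushout gives a
ses `Y ⟶ PO ⟶ C''`. -/
lemma isSes_pushout' (h : IsSes i p) {X' C'' : A} {f : X ⟶ X'} {g : X' ⟶ C''}
    (hf : IsSes f g) :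
    IsSes (pushout.inr f i) (pushout.desc g 0 (by simp [hf.w]) : pushout f i ⟶ C'') := by
  have := hf.mono
  have hm : Mono (pushout.inr f i) := Abelian.mono_pushout_of_mono_f f i
  have hepi : Epi (pushout.desc g 0 (by simp [hf.w]) : pushout f i ⟶ C'') := by
    have := hf.epi
    have : pushout.inl f i ≫ (pushout.desc g 0 (by simp [hf.w]) : pushout f i ⟶ C'') = g :=
      pushout.inl_desc _ _ _
    exact epi_of_epi_fac this
  refine isSes_of_coker hm (pushout.inr_desc _ _ _) ?_ hepi
  intro W k hk
  obtain ⟨l, hl⟩ := hf.desc (pushout.inl f i ≫ k)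
    (by rw [← assoc, pushout.condition, assoc, hk, comp_zero])
  refine ⟨l, ?_⟩
  apply pushout.hom_ext
  · rw [pushout.inl_desc_assoc, hl]
  · rw [pushout.inr_desc_assoc, zero_comp, hk]

end PullbackPushout

section Ext1

/-- Projective objects are in every left Ext-perp. -/
lemma ext1Zero_of_projective {X Y : A} (hX : Projective X) : Ext1Zero X Y := by
  intro E i p hses
  have := hses.epi
  exact ⟨Projective.factorThru (𝟙 X) p, Projective.factorThru_comp _ _⟩

/-- L-lift: given a ses `X ⟶ Y ⟶ Z` and `g : W ⟶ Z` with `Ext¹(W, X) = 0`,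
`g` lifts along the epi. -/
lemma lift_of_ext1Zero {X Y Z W : A} {i : X ⟶ Y} {p : Y ⟶ Z} (h : IsSes i p)
    (g : W ⟶ Z) (he : Ext1Zero W X) : ∃ g' : W ⟶ Y, g' ≫ p = g := by
  obtain ⟨s, hs⟩ := he _ _ (isSes_pullback h g)
  refine ⟨s ≫ pullback.fst p g, ?_⟩
  rw [assoc, pullback.condition, ← assoc, hs, id_comp]

/-- L-ext: given a ses `X ⟶ Y ⟶ Z` and `f : X ⟶ W` with `Ext¹(Z, W) = 0`,
`f` extends along the mono. -/
lemma extend_of_ext1Zero {X Y Z W : A} {i : X ⟶ Y} {p : Y ⟶ Z} (h : IsSes i p)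
    (f : X ⟶ W) (he : Ext1Zero Z W) : ∃ f' : Y ⟶ W, i ≫ f' = f := by
  have hpo := isSes_pushout h f
  obtain ⟨s, hs⟩ := he _ _ hpo
  obtain ⟨r, hr⟩ := hpo.retraction_of_section s hs
  refine ⟨pushout.inr f i ≫ r, ?_⟩
  rw [← assoc, ← pushout.condition, assoc, hr, comp_id]

/-- L-pb-split: given a morphism of short exact sequences
`(𝟙, u, v) : (i, p) ⟶ (j, π)` and a lift `g` of `v` along `π`, the first
sequence splits. -/
lemma split_of_sesMap_lift {X E K D C' : A} {i : X ⟶ E} {p : E ⟶ K}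
    {j : X ⟶ D} {π : D ⟶ C'} (he : IsSes i p) (hs : IsSes j π)
    (u : E ⟶ D) (v : K ⟶ C') (h1 : i ≫ u = j) (h2 : p ≫ v = u ≫ π)
    (g : K ⟶ D) (hg : g ≫ π = v) : ∃ s : K ⟶ E, s ≫ p = 𝟙 K := by
  have hpb := isSes_pullback hs v
  -- section of `pullback.snd π v`
  have hτ : (pullback.lift g (𝟙 K) (by simpa using hg) : K ⟶ pullback π v) ≫
      pullback.snd π v = 𝟙 K := pullback.lift_snd _ _ _
  obtain ⟨ρ, hρ⟩ := hpb.retraction_of_section _ hτ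
  -- comparison map
  have hcomp : (pullback.lift u p h2.symm : E ⟶ pullback π v) ≫ pullback.snd π v = p :=
    pullback.lift_snd _ _ _
  have hic : i ≫ (pullback.lift u p h2.symm : E ⟶ pullback π v) =
      pullback.lift j 0 (by simp [hs.w]) := by
    apply pullback.hom_ext
    · rw [assoc, pullback.lift_fst, pullback.lift_fst, h1]
    · rw [assoc, pullback.lift_snd, pullback.lift_snd, he.w]
  have hr : i ≫ (pullback.lift u p h2.symm ≫ ρ) = 𝟙 X := by
    rw [← assoc, hic, hρ]
  exact he.section_of_retraction _ hr

/-- Ext1Zero transfers along retracts in the first variable. -/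
lemma ext1Zero_retract {G X Y : A} (h : Ext1Zero G Y) (s : X ⟶ G) (r : G ⟶ X)
    (hsr : s ≫ r = 𝟙 X) : Ext1Zero X Y := by
  intro E i p hses
  obtain ⟨σ, hσ⟩ := h _ _ (isSes_pullback hses r)
  refine ⟨s ≫ σ ≫ pullback.fst p r, ?_⟩
  rw [assoc, assoc, pullback.condition, reassoc_of% hσ, hsr]

/-- Ext1Zero is closed under extensions in the first variable. -/
lemma ext1Zero_ext {X' X X'' Y : A} {a : X' ⟶ X} {b : X ⟶ X''} (hs : IsSes a b)
    (h' : Ext1Zero X' Y) (h'' : Ext1Zero X'' Y) : Ext1Zero X Y := by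
  intro E i p hses
  -- pull back along a
  have hpb := isSes_pullback hses a
  obtain ⟨σ, hσ⟩ := h' _ _ hpb
  obtain ⟨r', hr'⟩ := hpb.retraction_of_section σ hσ
  -- ses  PB ⟶ E ⟶ X''
  have hE : IsSes (pullback.fst p a) (p ≫ b) := isSes_pullback_fst hses hs
  -- extend r' : PB ⟶ Y along PB ⟶ E
  obtain ⟨r, hr⟩ := extend_of_ext1Zero hE r' h''
  refine hses.section_of_retraction r ?_
  have hfac : i ≫ r = (pullback.lift i 0 (by simp [hses.w]) : Y ⟶ pullback p a) ≫
      pullback.fst p a ≫ r := by rw [← assoc, pullback.lift_fst]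
  rw [hfac, hr, hr']

end Ext1

section Proj
open ZeroObject

/-- A retract of a projective object is projective. -/
lemma projective_of_retract {P X : A} (hP : Projective P) (s : X ⟶ P) (r : P ⟶ X)
    (hsr : s ≫ r = 𝟙 X) : Projective X := by
  constructor
  intro B B' f g hg
  obtain ⟨h, hh⟩ := hP.factors (r ≫ f) g
  exact ⟨s ≫ h, by rw [assoc, hh, ← assoc, hsr, id_comp]⟩

/-- The middle of a ses with projective ends is projective. -/
lemma projective_of_ses {P₁ Q P₂ : A} {i : P₁ ⟶ Q} {p : Q ⟶ P₂} (h : IsSes i p)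
    (h₁ : Projective P₁) (h₂ : Projective P₂) : Projective Q := by
  have := h.epi
  obtain ⟨s, hs⟩ := h₂.factors (𝟙 P₂) p
  have hd : (𝟙 Q - p ≫ s) ≫ p = 0 := by simp [Preadditive.sub_comp, assoc, hs]
  obtain ⟨v, hv⟩ := h.lift (𝟙 Q - p ≫ s) hd
  constructor
  intro B B' f g hg
  obtain ⟨h₁', hh₁⟩ := h₁.factors (i ≫ f) g
  obtain ⟨h₂', hh₂⟩ := h₂.factors (s ≫ f) g
  refine ⟨v ≫ h₁' + p ≫ h₂', ?_⟩
  rw [Preadditive.add_comp, assoc, assoc, hh₁, hh₂, ← assoc, ← assoc, hv]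
  simp [Preadditive.sub_comp, assoc]

/-- If every extension by the first syzygy splits, the syzygy argument:
an object `K` with `Ext1Zero K Z` for all `Z` that fit, is projective.
Concretely: if the ses `X ⟶ Y ⟶ K` splits for one epi from a projective,
then `K` is projective. -/
lemma projective_of_ext1Zero [EnoughProjectives A] {K : A}
    (h : ∀ Z : A, Ext1Zero K Z) : Projective K := by
  have hses : IsSes (kernel.ι (Projective.π K)) (Projective.π K) :=
    isSes_kernel (Projective.π K)
  obtain ⟨s, hs⟩ := h _ _ _ hses
  exact projective_of_retract (Projective.projective_over K) s (Projective.π K) hs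

/-- E2' / Schanuel: if `PdLeOne G` then the kernel of any epi from a projective
onto `G` is projective. -/
lemma projective_syzygy {G N Q : A} {n : N ⟶ Q} {q : Q ⟶ G} (hG : PdLeOne G)
    (hQ : Projective Q) (h : IsSes n q) : Projective N := by
  obtain ⟨P₁, P₀, i₀, π₀, hP₁, hP₀, hres⟩ := hG
  have := h.epi
  have := hres.epi
  -- PB := pullback π₀ q
  have hA := isSes_pullback hres q
  -- ses P₁ ⟶ PB ⟶ Q ; so PB is projective
  have hPB : Projective (pullback π₀ q) := projective_of_ses hA hP₁ hQ
  -- ses N ⟶ PB ⟶ P₀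
  have hB := isSes_pullback' hres h
  -- P₀ projective gives a section of pullback.fst π₀ q
  have : Epi (pullback.fst π₀ q) := Abelian.epi_pullback_of_epi_g π₀ q
  obtain ⟨τ, hτ⟩ := hP₀.factors (𝟙 P₀) (pullback.fst π₀ q)
  obtain ⟨ρ, hρ⟩ := hB.retraction_of_section τ hτ
  exact projective_of_retract hPB _ ρ hρ

/-- `PdLeOne` from any ses with projective kernel and middle. -/
lemma pdLeOne_of_ses {N Q X : A} {n : N ⟶ Q} {q : Q ⟶ X} (h : IsSes n q)
    (hN : Projective N) (hQ : Projective Q) : PdLeOne X :=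
  ⟨N, Q, n, q, hN, hQ, h⟩

/-- PDE: extension of a `pd ≤ 1` object by a projective has `pd ≤ 1`. -/
lemma pdLeOne_extension_of_projective {P G Z : A} {i : P ⟶ G} {p : G ⟶ Z}
    (h : IsSes i p) (hP : Projective P) (hZ : PdLeOne Z) : PdLeOne G := by
  obtain ⟨Z₁, Z₀, z₁, z₀, hZ₁, hZ₀, hres⟩ := hZ
  have := hres.epi
  -- PB := pullback p z₀
  have hA := isSes_pullback h z₀
  have hPB : Projective (pullback p z₀) := projective_of_ses hA hP hZ₀
  have hB := isSes_pullback' h hres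
  exact pdLeOne_of_ses hB hZ₁ hPB

/-- The zero object is projective. -/
lemma projective_zero : Projective (0 : A) := by
  constructor
  intro B B' f g hg
  exact ⟨0, by rw [zero_comp, (isZero_zero A).eq_of_src f 0]⟩

/-- Projective objects have `pd ≤ 1`. -/
lemma pdLeOne_of_projective {P : A} (hP : Projective P) : PdLeOne P := by
  refine ⟨0, P, 0, 𝟙 P, projective_zero, hP, ?_⟩
  refine isSes_of_ker inferInstance (zero_comp) ?_ ?_
  · intro W k hk
    rw [comp_id] at hk
    exact ⟨0, by rw [zero_comp, hk]⟩
  · constructor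
    intro W u v _
    exact (isZero_zero A).eq_of_tgt u v

end Proj

section L1

/-- L1: for `X` of projective dimension at most one, `Ext¹(X, -)` is right exact:
if `Ext¹(X, B) = 0` and `B ↠ C` then `Ext¹(X, C) = 0`. -/
lemma ext1Zero_of_epi_of_pdLeOne {X B C : A} (hX : PdLeOne X) (hB : Ext1Zero X B)
    (g : B ⟶ C) (hg : Epi g) : Ext1Zero X C := by
  intro E iE pE hses
  obtain ⟨P₁, P₀, q, π, hP₁, hP₀, hres⟩ := hX
  have := hses.epi
  have := hres.epi
  obtain ⟨h, hh⟩ := hP₀.factors π pE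
  obtain ⟨f, hf⟩ := hses.lift (q ≫ h) (by rw [assoc, hh, hres.w])
  obtain ⟨f', hf'⟩ := hP₁.factors f g
  -- pushout of the resolution along f'
  have hpo := isSes_pushout hres f'
  obtain ⟨σ', hσ'⟩ := hB _ _ hpo
  have hu : f' ≫ (g ≫ iE) = q ≫ h := by rw [← assoc, hf', hf]
  set u : pushout f' q ⟶ E := pushout.desc (g ≫ iE) h hu with hudef
  have hup : u ≫ pE = pushout.desc 0 π (by simp [hres.w]) := by
    apply pushout.hom_ext
    · rw [pushout.inl_desc_assoc, assoc, hses.w, comp_zero, pushout.inl_desc]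
    · rw [pushout.inr_desc_assoc, hh, pushout.inr_desc]
  exact ⟨σ' ≫ u, by rw [assoc, hup, hσ']⟩

/-- Retract closure of `PdLeOne`. -/
lemma pdLeOne_retract [EnoughProjectives A] {G X : A} (hG : PdLeOne G)
    (s : X ⟶ G) (r : G ⟶ X) (hsr : s ≫ r = 𝟙 X) : PdLeOne X := by
  set P := Projective.over X
  set π : P ⟶ X := Projective.π X
  set N := kernel π
  set n : N ⟶ P := kernel.ι π
  set PG := Projective.over G
  set ε : PG ⟶ G := Projective.π G
  set d : P ⊞ PG ⟶ G := biprod.desc (π ≫ s) ε with hd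
  have hεd : biprod.inr ≫ d = ε := biprod.inr_desc _ _
  have hdepi : Epi d := epi_of_epi_fac hεd
  have hkd : IsSes (kernel.ι d) d := isSes_kernel d
  have hProjSum : Projective (P ⊞ PG) := inferInstance
  have hM : Projective (kernel d) := projective_syzygy hG hProjSum hkd
  -- ν : N ⟶ kernel d
  have hnπ : n ≫ π = 0 := kernel.condition π
  have hνw : (n ≫ biprod.inl) ≫ d = 0 := by
    rw [assoc, biprod.inl_desc, ← assoc, hnπ, zero_comp]
  set ν : N ⟶ kernel d := kernel.lift d (n ≫ biprod.inl) hνw with hν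
  have hνμ : ν ≫ kernel.ι d = n ≫ biprod.inl := kernel.lift_ι _ _ _
  -- δ : PG ⟶ P
  have : Epi π := inferInstance
  obtain ⟨δ, hδ⟩ := (Projective.projective_over G).factors (ε ≫ r) π
  -- w : kernel d ⟶ P
  set μ : kernel d ⟶ P ⊞ PG := kernel.ι d with hμ
  set w : kernel d ⟶ P := μ ≫ biprod.fst + μ ≫ biprod.snd ≫ δ with hw
  have hdsum : d = biprod.fst ≫ π ≫ s + biprod.snd ≫ ε := by
    apply biprod.hom_ext' <;> simp [hd]
  have hμd : μ ≫ biprod.fst ≫ π ≫ s + μ ≫ biprod.snd ≫ ε = 0 := by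
    rw [← Preadditive.comp_add, ← hdsum]
    exact kernel.condition d
  have e1 : μ ≫ biprod.snd ≫ ε = -(μ ≫ biprod.fst ≫ π ≫ s) :=
    eq_neg_of_add_eq_zero_left (by rw [add_comm]; exact hμd)
  have hwπ : w ≫ π = 0 := by
    have h1 : w ≫ π = μ ≫ biprod.fst ≫ π + μ ≫ biprod.snd ≫ δ ≫ π := by
      simp [hw, Preadditive.add_comp, assoc]
    rw [h1, hδ]
    have h2 : μ ≫ biprod.snd ≫ ε ≫ r = (μ ≫ biprod.snd ≫ ε) ≫ r := by
      simp [assoc]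
    rw [h2, e1]
    simp [Preadditive.neg_comp, assoc, hsr]
  set ρ : kernel d ⟶ N := kernel.lift π w hwπ with hρ
  have hρn : ρ ≫ n = w := kernel.lift_ι _ _ _
  have hνρ : ν ≫ ρ = 𝟙 N := by
    have hmono : Mono n := inferInstance
    rw [← cancel_mono n, assoc]
    calc ν ≫ ρ ≫ n = ν ≫ w := by rw [hρn]
      _ = (ν ≫ μ) ≫ biprod.fst + (ν ≫ μ) ≫ biprod.snd ≫ δ := by
          rw [hw, Preadditive.comp_add]; simp [assoc]
      _ = 𝟙 N ≫ n := by rw [hνμ]; simp [assoc]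
  have hNproj : Projective N := projective_of_retract hM ν ρ hνρ
  exact ⟨N, P, n, π, hNproj, inferInstance, isSes_kernel π⟩

end L1

section Misc

/-- If the quotient of a ses is zero, the inclusion is an isomorphism. -/
lemma isIso_of_isZero_cok {X Y Z : A} {i : X ⟶ Y} {p : Y ⟶ Z} (h : IsSes i p)
    (hz : IsZero Z) : IsIso i := by
  have := h.mono
  have hepi : Epi i := by
    constructor
    intro W u v huv
    have h0 : i ≫ (u - v) = 0 := by simp [Preadditive.comp_sub, huv]
    obtain ⟨l, hl⟩ := h.desc (u - v) h0
    have hl0 : l = 0 := hz.eq_of_src l 0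
    rw [hl0, comp_zero] at hl
    exact sub_eq_zero.mp hl.symm
  exact isIso_of_mono_of_epi i

/-- An epi that is zero forces the target to be zero. -/
lemma isZero_of_epi_zero {X Y : A} (f : X ⟶ Y) (hf : Epi f) (h0 : f = 0) :
    IsZero Y := by
  rw [IsZero.iff_id_eq_zero]
  apply (cancel_epi f).1
  rw [h0]
  simp

/-- The key splitting lemma used to prove that objects of `C` have projective
dimension at most one: given a ses `K ⟶ P ⟶ X` with `P` projective, an extension
`Z ⟶ E ⟶ K`, a mono `u : E ⟶ d`, such that `Ext¹(X, -)` vanishes on the cokernel of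
`Z ⟶ E ⟶ d`, the extension splits. -/
lemma ext1_split_of_embedding {K P X Z E d : A} {n : K ⟶ P} {ρ : P ⟶ X}
    (hKP : IsSes n ρ) (hP : Projective P) {i : Z ⟶ E} {p : E ⟶ K} (he : IsSes i p)
    (u : E ⟶ d) (hu : Mono u)
    (hgood : ∀ (π'' : d ⟶ cokernel (i ≫ u)), IsSes (i ≫ u) π'' → Ext1Zero X (cokernel (i ≫ u))) :
    ∃ s : K ⟶ E, s ≫ p = 𝟙 K := by
  have := he.mono
  have hj : Mono (i ≫ u) := mono_comp i u
  set π'' := cokernel.π (i ≫ u) with hπ''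
  have hs : IsSes (i ≫ u) π'' := isSes_cokernel (i ≫ u)
  have hXc : Ext1Zero X (cokernel (i ≫ u)) := hgood π'' hs
  obtain ⟨m, hm⟩ := he.desc (u ≫ π'') (by rw [← assoc]; exact cokernel.condition _)
  obtain ⟨M, hM⟩ := extend_of_ext1Zero hKP m hXc
  -- pullback of (i≫u, π'') along M
  have := hs.epi
  have hpb := isSes_pullback hs M
  have hsnd : Epi (pullback.snd π'' M) := Abelian.epi_pullback_of_epi_f π'' M
  obtain ⟨τ, hτ⟩ := hP.factors (𝟙 P) (pullback.snd π'' M)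
  set g : K ⟶ d := n ≫ τ ≫ pullback.fst π'' M with hg
  have hgπ : g ≫ π'' = m := by
    calc g ≫ π'' = n ≫ τ ≫ pullback.fst π'' M ≫ π'' := by rw [hg]; simp [assoc]
      _ = n ≫ τ ≫ pullback.snd π'' M ≫ M := by rw [pullback.condition]
      _ = n ≫ M := by rw [reassoc_of% hτ]
      _ = m := hM
  exact split_of_sesMap_lift he hs u m rfl hm g hgπ

end Misc

section Misc2

/-- A mono that is zero forces the source to be zero. -/
lemma isZero_of_mono_zero {X Y : A} (f : X ⟶ Y) (hf : Mono f) (h0 : f = 0) :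
    IsZero X := by
  rw [IsZero.iff_id_eq_zero]
  apply (cancel_mono f).1
  rw [h0]
  simp

/-- If the kernel of a ses is zero, the projection is an isomorphism. -/
lemma isIso_of_isZero_ker {X Y Z : A} {i : X ⟶ Y} {p : Y ⟶ Z} (h : IsSes i p)
    (hz : IsZero X) : IsIso p := by
  have := h.epi
  have hmono : Mono p := by
    constructor
    intro W u v huv
    have h0 : (u - v) ≫ p = 0 := by simp [Preadditive.sub_comp, huv]
    obtain ⟨l, hl⟩ := h.lift (u - v) h0
    have hl0 : l = 0 := hz.eq_of_tgt l 0
    rw [hl0, zero_comp] at hl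
    exact sub_eq_zero.mp hl.symm
  exact isIso_of_mono_of_epi p

/-- The ses `X ⟶ X ⊞ Y ⟶ Y`. -/
lemma isSes_biprod (X Y : A) : IsSes (biprod.inl : X ⟶ X ⊞ Y) biprod.snd := by
  refine isSes_of_coker inferInstance (by simp) ?_ inferInstance
  intro W k hk
  refine ⟨biprod.inr ≫ k, ?_⟩
  apply biprod.hom_ext' <;> simp [hk]

end Misc2

section Part2

variable [EnoughProjectives A] {C T F : Set A}

lemma tp_t_iff (htf : IsTorsionPair T F) {X : A} :
    X ∈ T ↔ ∀ Y ∈ F, ∀ f : X ⟶ Y, f = 0 := by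
  constructor
  · intro hX Y hY f
    exact htf.hom_zero hX hY f
  · intro h
    obtain ⟨tX, fX, i, p, htX, hfX, hses⟩ := htf.seq X
    have hp0 : p = 0 := h fX hfX p
    have hz : IsZero fX := isZero_of_epi_zero p hses.epi hp0
    have : IsIso i := isIso_of_isZero_cok hses hz
    exact htf.isoClosed_torsion (asIso i) htX

lemma tp_f_iff (htf : IsTorsionPair T F) {Y : A} :
    Y ∈ F ↔ ∀ X ∈ T, ∀ f : X ⟶ Y, f = 0 := by
  constructor
  · intro hY X hX f
    exact htf.hom_zero hX hY f
  · intro h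
    obtain ⟨tY, fY, i, p, htY, hfY, hses⟩ := htf.seq Y
    have hi0 : i = 0 := h tY htY i
    have hz : IsZero tY := isZero_of_mono_zero i hses.mono hi0
    have : IsIso p := isIso_of_isZero_ker hses hz
    exact htf.isoClosed_torsionFree (asIso p).symm hfY

lemma tp_quot (htf : IsTorsionPair T F) {X Q : A} (hX : X ∈ T) (g : X ⟶ Q)
    (hg : Epi g) : Q ∈ T := by
  rw [tp_t_iff htf]
  intro Y hY f
  have : g ≫ f = 0 := htf.hom_zero hX hY (g ≫ f)
  exact (cancel_epi g).1 (by rw [this, comp_zero])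

lemma tp_ext (htf : IsTorsionPair T F) {X E B : A} {a : X ⟶ E} {b : E ⟶ B}
    (hses : IsSes a b) (hX : X ∈ T) (hB : B ∈ T) : E ∈ T := by
  rw [tp_t_iff htf]
  intro Y hY f
  have h0 : a ≫ f = 0 := htf.hom_zero hX hY (a ≫ f)
  obtain ⟨l, hl⟩ := hses.desc f h0
  have : l = 0 := htf.hom_zero hB hY l
  rw [← hl, this, comp_zero]

lemma ctp_ext1 (hct : IsCotorsionPair C T) {X Y : A} (hX : X ∈ C) (hY : Y ∈ T) :
    Ext1Zero X Y := by
  rw [hct.left_eq] at hX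
  exact hX Y hY

lemma ctp_proj_mem (hct : IsCotorsionPair C T) {P : A} (hP : Projective P) : P ∈ C := by
  rw [hct.left_eq]
  intro Y _
  exact ext1Zero_of_projective hP

/-- Objects of `C` have projective dimension at most one. -/
lemma ctp_pdLeOne (hct : IsCotorsionPair C T) (htf : IsTorsionPair T F) {X : A}
    (hX : X ∈ C) : PdLeOne X := by
  set ρ : Projective.over X ⟶ X := Projective.π X
  have hKP : IsSes (kernel.ι ρ) ρ := isSes_kernel ρ
  refine ⟨kernel ρ, Projective.over X, kernel.ι ρ, ρ, ?_, inferInstance, hKP⟩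
  apply projective_of_ext1Zero
  intro Z E' i p hses
  obtain ⟨d, c, u, w, hd, hc, hsesu⟩ := hct.seq₂ E'
  have hu : Mono u := hsesu.mono
  exact ext1_split_of_embedding hKP (Projective.projective_over X) hses u hu
    (fun π'' hsesπ => ctp_ext1 hct hX (tp_quot htf hd π'' hsesπ.epi))

/-- The intersection is closed under extensions in `C`. -/
lemma ctp_c_ext (hct : IsCotorsionPair C T) {X E B : A} {a : X ⟶ E} {b : E ⟶ B}
    (hses : IsSes a b) (hX : X ∈ C) (hB : B ∈ C) : E ∈ C := by
  rw [hct.left_eq]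
  intro Y hY
  exact ext1Zero_ext hses (ctp_ext1 hct hX hY) (ctp_ext1 hct hB hY)

lemma ctp_w_tilting (hct : IsCotorsionPair C T) (htf : IsTorsionPair T F) :
    IsTilting (C ∩ T) := by
  constructor
  · constructor
    · -- sum_mem
      intro X Y hX hY
      have hses := isSes_biprod X Y
      exact ⟨ctp_c_ext hct hses hX.1 hY.1, tp_ext htf hses hX.2 hY.2⟩
    · -- summand_mem
      rintro X Y hX ⟨s, r, hsr⟩
      constructor
      · rw [hct.left_eq]
        intro Z hZ
        exact ext1Zero_retract (ctp_ext1 hct hX.1 hZ) s r hsr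
      · rw [tp_t_iff htf]
        intro Z hZ f
        have h0 : r ≫ f = 0 := htf.hom_zero hX.2 hZ (r ≫ f)
        calc f = (s ≫ r) ≫ f := by rw [hsr, id_comp]
          _ = s ≫ r ≫ f := by rw [assoc]
          _ = 0 := by rw [h0, comp_zero]
    · -- ext1_zero
      intro X Y hX hY
      exact ctp_ext1 hct hX.1 hY.2
    · -- pd_le_one
      intro X hX
      exact ctp_pdLeOne hct htf hX.1
    · -- coresolution
      intro P hP
      obtain ⟨d, c, i, p, hd, hc, hses⟩ := hct.seq₂ P
      have hcT : c ∈ T := tp_quot htf hd p hses.epi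
      have hdC : d ∈ C := ctp_c_ext hct hses (ctp_proj_mem hct hP) hc
      exact ⟨d, c, i, p, ⟨hdC, hd⟩, ⟨hc, hcT⟩, hses⟩
  · -- contravariantly finite
    intro E
    obtain ⟨tE, fE, iE, pE, htE, hfE, hsesE⟩ := htf.seq E
    obtain ⟨t', c, a, b, ht', hc, hses⟩ := hct.seq₁ tE
    have hcT : c ∈ T := tp_ext htf hses ht' htE
    refine ⟨c, b ≫ iE, ⟨hc, hcT⟩, ?_⟩
    intro w hw ψ
    have h0 : ψ ≫ pE = 0 := htf.hom_zero hw.2 hfE (ψ ≫ pE)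
    obtain ⟨ψ', hψ'⟩ := hsesE.lift ψ h0
    obtain ⟨g, hg⟩ := lift_of_ext1Zero hses ψ' (ctp_ext1 hct hw.1 ht')
    exact ⟨g, by rw [← assoc, hg, hψ']⟩

lemma ctp_t_eq_fac (hct : IsCotorsionPair C T) (htf : IsTorsionPair T F) :
    T = Fac (C ∩ T) := by
  ext Y
  constructor
  · intro hY
    obtain ⟨t₁, c₁, i, p, ht₁, hc₁, hses⟩ := hct.seq₁ Y
    have := hses.epi
    exact ⟨c₁, ⟨hc₁, tp_ext htf hses ht₁ hY⟩, p, this⟩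
  · rintro ⟨w, hw, p, hp⟩
    exact tp_quot htf hw.2 p hp

lemma ctp_f_eq_perp (hct : IsCotorsionPair C T) (htf : IsTorsionPair T F) :
    F = rightHomPerp (C ∩ T) := by
  ext Y
  constructor
  · intro hY w hw f
    exact htf.hom_zero hw.2 hY f
  · intro h
    rw [tp_f_iff htf]
    intro X hX f
    rw [ctp_t_eq_fac hct htf] at hX
    obtain ⟨w, hw, q, hq⟩ := hX
    have : q ≫ f = 0 := h w hw (q ≫ f)
    exact (cancel_epi q).1 (by rw [this, comp_zero])

lemma ctp_c_eq (hct : IsCotorsionPair C T) (htf : IsTorsionPair T F) :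
    C = {X : A | X ∈ leftExt1Perp (C ∩ T) ∧ PdLeOne X} := by
  ext X
  constructor
  · intro hX
    exact ⟨fun w hw => ctp_ext1 hct hX hw.2, ctp_pdLeOne hct htf hX⟩
  · rintro ⟨hperp, hpd⟩
    rw [hct.left_eq]
    intro Y hY
    rw [ctp_t_eq_fac hct htf] at hY
    obtain ⟨w, hw, q, hq⟩ := hY
    exact ext1Zero_of_epi_of_pdLeOne hpd (hperp w hw) q hq

end Part2

section Part1

variable [EnoughProjectives A] {T : Set A}

lemma fac_iso {X Y : A} (e : X ≅ Y) (hX : X ∈ Fac T) : Y ∈ Fac T := by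
  obtain ⟨T', hT', q, hq⟩ := hX
  exact ⟨T', hT', q ≫ e.hom, epi_comp q e.hom⟩

lemma t_sub_fac {X : A} (hX : X ∈ T) : X ∈ Fac T := ⟨X, hX, 𝟙 X, inferInstance⟩

lemma tilt_ext1_fac (ht : IsWeakTilting T) {X Y : A} (hX : X ∈ T) (hY : Y ∈ Fac T) :
    Ext1Zero X Y := by
  obtain ⟨T', hT', q, hq⟩ := hY
  exact ext1Zero_of_epi_of_pdLeOne (ht.pd_le_one X hX) (ht.ext1_zero hX hT') q hq

lemma c0_ext1_fac {X Y : A} (hX : X ∈ leftExt1Perp T ∧ PdLeOne X) (hY : Y ∈ Fac T) :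
    Ext1Zero X Y := by
  obtain ⟨T', hT', q, hq⟩ := hY
  exact ext1Zero_of_epi_of_pdLeOne hX.2 (hX.1 T' hT') q hq

lemma t_sub_c0 (ht : IsWeakTilting T) {X : A} (hX : X ∈ T) :
    X ∈ leftExt1Perp T ∧ PdLeOne X :=
  ⟨fun Y hY => ht.ext1_zero hX hY, ht.pd_le_one X hX⟩

/-- The torsion sequence associated to a right `T`-approximation. -/
lemma approx_torsion_seq (ht : IsTilting T) (E : A) :
    ∃ (tE fE : A) (i : tE ⟶ E) (p : E ⟶ fE), tE ∈ Fac T ∧ fE ∈ rightHomPerp T ∧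
      IsSes i p := by
  obtain ⟨X₀, φ, hX₀, happrox⟩ := ht.contravariantly_finite E
  have hses : IsSes (Abelian.image.ι φ) (cokernel.π φ) := isSes_kernel (cokernel.π φ)
  refine ⟨Abelian.image φ, cokernel φ, Abelian.image.ι φ, cokernel.π φ,
    ⟨X₀, hX₀, Abelian.factorThruImage φ, inferInstance⟩, ?_, hses⟩
  intro Y hY f
  have hext : Ext1Zero Y (Abelian.image φ) :=
    tilt_ext1_fac ht.toIsWeakTilting hY ⟨X₀, hX₀, Abelian.factorThruImage φ, inferInstance⟩
  obtain ⟨g, hg⟩ := lift_of_ext1Zero hses f hext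
  obtain ⟨h, hh⟩ := happrox Y hY g
  rw [← hg, ← hh, assoc, cokernel.condition, comp_zero]

/-- Lemma Z: an object right-orthogonal to `T` on which all `Ext¹(T, -)` vanish
is zero. -/
lemma z_lemma (ht : IsWeakTilting T) {F₀ : A}
    (hperp : ∀ Y ∈ T, ∀ f : Y ⟶ F₀, f = 0)
    (hext : ∀ Y ∈ T, Ext1Zero Y F₀) : IsZero F₀ := by
  set π : Projective.over F₀ ⟶ F₀ := Projective.π F₀
  obtain ⟨T₀, T₁, a, b, hT₀, hT₁, hcor⟩ :=
    ht.coresolution (Projective.over F₀) (Projective.projective_over F₀)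
  obtain ⟨g, hg⟩ := extend_of_ext1Zero hcor π (hext T₁ hT₁)
  have hg0 : g = 0 := hperp T₀ hT₀ g
  have hπ0 : π = 0 := by rw [← hg, hg0, comp_zero]
  exact isZero_of_epi_zero π inferInstance hπ0

/-- The `Fac T` cover with `T`-cokernel of an arbitrary object. -/
lemma fac_cover (ht : IsWeakTilting T) (K : A) :
    ∃ (Y T₁ : A) (i : K ⟶ Y) (p : Y ⟶ T₁), Y ∈ Fac T ∧ T₁ ∈ T ∧ IsSes i p := by
  set π : Projective.over K ⟶ K := Projective.π K
  obtain ⟨T₀, T₁, a, b, hT₀, hT₁, hcor⟩ :=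
    ht.coresolution (Projective.over K) (Projective.projective_over K)
  have hpo := isSes_pushout hcor π
  refine ⟨pushout π a, T₁, pushout.inl π a, pushout.desc 0 b (by simp [hcor.w]),
    ⟨T₀, hT₀, pushout.inr π a, ?_⟩, hT₁, hpo⟩
  infer_instance

/-- seq₁ data for the constructed cotorsion pair. -/
lemma part1_seq₁ (ht : IsWeakTilting T) (X : A) :
    ∃ (dX cX : A) (i : dX ⟶ cX) (p : cX ⟶ X), dX ∈ Fac T ∧
      (cX ∈ leftExt1Perp T ∧ PdLeOne cX) ∧ IsSes i p ∧
      (Ext1Zero X dX → ∃ s : X ⟶ cX, s ≫ p = 𝟙 X) := by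
  set ρ : Projective.over X ⟶ X := Projective.π X
  have hKP : IsSes (kernel.ι ρ) ρ := isSes_kernel ρ
  obtain ⟨Y, T₁, f, g, hY, hT₁, hsesY⟩ := fac_cover ht (kernel ρ)
  have hA := isSes_pushout hKP f
  have hB := isSes_pushout' hKP hsesY
  have hproj : Projective (Projective.over X) := Projective.projective_over X
  refine ⟨Y, pushout f (kernel.ι ρ), pushout.inl f (kernel.ι ρ),
    pushout.desc 0 ρ (by simp [hKP.w]), hY, ⟨?_, ?_⟩, hA, ?_⟩
  · intro Z hZ
    exact ext1Zero_ext hB (ext1Zero_of_projective hproj) (ht.ext1_zero hT₁ hZ)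
  · exact pdLeOne_extension_of_projective hB hproj (ht.pd_le_one T₁ hT₁)
  · intro hext
    exact hext _ _ hA

end Part1

section Part1b

variable [EnoughProjectives A] {T : Set A}

/-- left_eq for the constructed cotorsion pair. -/
lemma part1_left_eq (ht : IsWeakTilting T) :
    {X : A | X ∈ leftExt1Perp T ∧ PdLeOne X} = {X : A | ∀ Y ∈ Fac T, Ext1Zero X Y} := by
  ext X
  constructor
  · intro hX Y hY
    exact c0_ext1_fac hX hY
  · intro hX
    constructor
    · intro Y hY
      exact hX Y (t_sub_fac hY)
    · obtain ⟨dX, cX, i, p, hdX, hcX, hses, hsplit⟩ := part1_seq₁ ht X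
      obtain ⟨s, hs⟩ := hsplit (hX dX hdX)
      exact pdLeOne_retract hcX.2 s p hs

/-- right_eq for the constructed cotorsion pair. -/
lemma part1_right_eq (ht : IsTilting T) :
    Fac T = {Y : A | ∀ X ∈ {X : A | X ∈ leftExt1Perp T ∧ PdLeOne X}, Ext1Zero X Y} := by
  ext Y
  constructor
  · intro hY X hX
    exact c0_ext1_fac hX hY
  · intro H
    obtain ⟨tY, fY, i, p, htY, hfY, hses⟩ := approx_torsion_seq ht Y
    have hz : IsZero fY := by
      refine z_lemma ht.toIsWeakTilting hfY ?_
      intro Z hZ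
      have hZY : Ext1Zero Z Y := H Z (t_sub_c0 ht.toIsWeakTilting hZ)
      exact ext1Zero_of_epi_of_pdLeOne (ht.pd_le_one Z hZ) hZY p hses.epi
    have : IsIso i := isIso_of_isZero_cok hses hz
    exact fac_iso (asIso i) htY

/-- The intersection recovers `T`. -/
lemma part1_inter (ht : IsTilting T) :
    {X : A | X ∈ leftExt1Perp T ∧ PdLeOne X} ∩ Fac T = T := by
  ext X
  constructor
  · rintro ⟨hXC, hXF⟩
    -- the approximation is epi
    obtain ⟨X₀, φ, hX₀, happrox⟩ := ht.contravariantly_finite X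
    have hφepi : Epi φ := by
      obtain ⟨T'', hT'', q, hq⟩ := hXF
      obtain ⟨h, hh⟩ := happrox T'' hT'' q
      exact epi_of_epi_fac hh
    have hses : IsSes (kernel.ι φ) φ := isSes_kernel φ
    -- Step A : Ext¹(T', kernel φ) = 0 for all T' ∈ T
    have stepA : ∀ T' ∈ T, Ext1Zero T' (kernel φ) := by
      intro T' hT' E' iK pK hsesE'
      set k : kernel φ ⟶ X₀ := kernel.ι φ
      have hD4a := isSes_pushout hsesE' k
      have hD4b := isSes_pushout' hsesE' hses
      obtain ⟨σ, hσ⟩ := ht.ext1_zero hT' hX₀ _ _ hD4a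
      set q' : pushout k iK ⟶ X := pushout.desc φ 0 (by simp [hses.w]) with hq'
      obtain ⟨h₀, hh₀⟩ := happrox T' hT' (σ ≫ q')
      set τ : T' ⟶ pushout k iK := σ - h₀ ≫ pushout.inl k iK with hτ
      have hτπ : τ ≫ pushout.desc 0 pK (by simp [hsesE'.w]) = 𝟙 T' := by
        rw [hτ, Preadditive.sub_comp, hσ, assoc, pushout.inl_desc, comp_zero, sub_zero]
      have hτq : τ ≫ q' = 0 := by
        rw [hτ, Preadditive.sub_comp, assoc, pushout.inl_desc, hh₀, sub_self]
      obtain ⟨τ', hτ'⟩ := hD4b.lift τ hτq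
      refine ⟨τ', ?_⟩
      have : pushout.inr k iK ≫ pushout.desc 0 pK (by simp [hsesE'.w]) = pK :=
        pushout.inr_desc _ _ _
      rw [← this, ← assoc, hτ', hτπ]
    -- Step B : kernel φ ∈ Fac T
    obtain ⟨tK, fK, i', p', htK, hfK, hses'⟩ := approx_torsion_seq ht (kernel φ)
    have hzK : IsZero fK := by
      refine z_lemma ht.toIsWeakTilting hfK ?_
      intro Z hZ
      exact ext1Zero_of_epi_of_pdLeOne (ht.pd_le_one Z hZ) (stepA Z hZ) p' hses'.epi
    have hiso' : IsIso i' := isIso_of_isZero_cok hses' hzK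
    have hKfac : kernel φ ∈ Fac T := fac_iso (asIso i') htK
    -- Step C : split and conclude
    have hext : Ext1Zero X (kernel φ) := c0_ext1_fac hXC hKfac
    obtain ⟨s, hs⟩ := hext _ _ hses
    exact ht.summand_mem hX₀ ⟨s, φ, hs⟩
  · intro hX
    exact ⟨t_sub_c0 ht.toIsWeakTilting hX, t_sub_fac hX⟩

end Part1b
/-- The assignments `T ↦ ({X ∈ ^{⊥₁}T : pd X ≤ 1}, Fac T, T^⊥)` and
`(C, T, F) ↦ C ∩ T` are mutually inverse bijections between tilting subcategories and
cotorsion torsion triples. -/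
theorem statement14 [EnoughProjectives A] :
    (∀ T : Set A, IsTilting T →
      (IsCotorsionPair {X : A | X ∈ leftExt1Perp T ∧ PdLeOne X} (Fac T) ∧
       IsTorsionPair (Fac T) (rightHomPerp T)) ∧
      {X : A | X ∈ leftExt1Perp T ∧ PdLeOne X} ∩ Fac T = T) ∧
    (∀ C T F : Set A, IsCotorsionPair C T → IsTorsionPair T F →
      IsTilting (C ∩ T) ∧
      C = {X : A | X ∈ leftExt1Perp (C ∩ T) ∧ PdLeOne X} ∧
      T = Fac (C ∩ T) ∧
      F = rightHomPerp (C ∩ T)) := by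
  constructor
  · intro T ht
    refine ⟨⟨?_, ?_⟩, part1_inter ht⟩
    · refine ⟨part1_left_eq ht.toIsWeakTilting, part1_right_eq ht, ?_, ?_⟩
      · intro X
        obtain ⟨dX, cX, i, p, hd, hc, hses, _⟩ := part1_seq₁ ht.toIsWeakTilting X
        exact ⟨dX, cX, i, p, hd, hc, hses⟩
      · intro X
        obtain ⟨Y, T₁, i, p, hY, hT₁, hses⟩ := fac_cover ht.toIsWeakTilting X
        exact ⟨Y, T₁, i, p, hY, t_sub_c0 ht.toIsWeakTilting hT₁, hses⟩
    · refine ⟨?_, ?_, ?_, approx_torsion_seq ht⟩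
      · intro X Y e hX
        exact fac_iso e hX
      · intro X Y e hX Z hZ f
        have h0 : f ≫ e.inv = 0 := hX Z hZ (f ≫ e.inv)
        calc f = (f ≫ e.inv) ≫ e.hom := by simp
          _ = 0 := by rw [h0, zero_comp]
      · rintro X Y ⟨T', hT', q, hq⟩ hY f
        have h0 : q ≫ f = 0 := hY T' hT' (q ≫ f)
        exact (cancel_epi q).1 (by rw [h0, comp_zero])
  · intro C T F hct htf
    exact ⟨ctp_w_tilting hct htf, ctp_c_eq hct htf, ctp_t_eq_fac hct htf,
      ctp_f_eq_perp hct htf⟩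

end Paper
end

section
/- Let Λ be an Artin algebra and (C, T, F) a cotorsion torsion triple in mod Λ. Then the Auslander–Reiten translation τ induces an equivalence from the additive quotient C/(proj Λ) to F. -/
open CategoryTheory Category Limits
open ZeroObject Preadditive

attribute [local instance] CategoryTheory.Abelian.hasFiniteBiproducts
attribute [local instance] CategoryTheory.Limits.HasFiniteBiproducts.of_hasFiniteProducts

universe w v u

namespace Paper

variable {A : Type u} [Category.{v} A] [Abelian A]

/-- The category `mod Λ` of finitely generated `Λ`-modules. -/
abbrev ModF (Λ : Type u) [Ring Λ] :=
  ObjectProperty.FullSubcategory (fun M : ModuleCat.{u} Λ => Module.Finite Λ M)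

/-- The relation identifying morphisms whose difference factors through an object
of the class `P`. -/
def stableRel {B : Type u} [Category.{v} B] [Abelian B] (P : Set B) : HomRel B :=
  fun {X Y} f g => FactorsThroughClass P (f - g)

/-- The stable category of `B` modulo morphisms factoring through objects of `P`. -/
abbrev StableCat {B : Type u} [Category.{v} B] [Abelian B] (P : Set B) :=
  CategoryTheory.Quotient (stableRel P)

/-! ### Auxiliary material for the proof of Statement 15 -/

section Aux

variable {B : Type u} [Category.{v} B] [Abelian B]

lemma ftc_of_eq {P : Set B} {X Y : B} {f g : X ⟶ Y} (h : FactorsThroughClass P f)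
    (hfg : f = g) : FactorsThroughClass P g := hfg ▸ h

lemma ftc_neg {P : Set B} {X Y : B} {f : X ⟶ Y} (h : FactorsThroughClass P f) :
    FactorsThroughClass P (-f) := by
  obtain ⟨Z, hZ, a, b, hab⟩ := h
  exact ⟨Z, hZ, a, -b, by rw [Preadditive.comp_neg, hab]⟩

lemma ftc_add {P : Set B} (hP : ∀ {X Y : B}, X ∈ P → Y ∈ P → (X ⊞ Y) ∈ P)
    {X Y : B} {f g : X ⟶ Y} (hf : FactorsThroughClass P f) (hg : FactorsThroughClass P g) :
    FactorsThroughClass P (f + g) := by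
  obtain ⟨Z₁, hZ₁, a₁, b₁, h₁⟩ := hf
  obtain ⟨Z₂, hZ₂, a₂, b₂, h₂⟩ := hg
  exact ⟨Z₁ ⊞ Z₂, hP hZ₁ hZ₂, biprod.lift a₁ a₂, biprod.desc b₁ b₂, by
    rw [biprod.lift_desc, h₁, h₂]⟩

lemma ftc_comp_left {P : Set B} {W X Y : B} (g : W ⟶ X) {f : X ⟶ Y}
    (h : FactorsThroughClass P f) : FactorsThroughClass P (g ≫ f) := by
  obtain ⟨Z, hZ, a, b, hab⟩ := h
  exact ⟨Z, hZ, g ≫ a, b, by rw [assoc, hab]⟩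

lemma ftc_comp_right {P : Set B} {X Y W : B} {f : X ⟶ Y} (g : Y ⟶ W)
    (h : FactorsThroughClass P f) : FactorsThroughClass P (f ≫ g) := by
  obtain ⟨Z, hZ, a, b, hab⟩ := h
  exact ⟨Z, hZ, a, b ≫ g, by rw [← assoc, hab]⟩

lemma stableRel_congruence (P : Set B) (h0 : (0 : B) ∈ P)
    (hP : ∀ {X Y : B}, X ∈ P → Y ∈ P → (X ⊞ Y) ∈ P) : Congruence (stableRel P) where
  equivalence :=
    { refl := fun f => show FactorsThroughClass P (f - f) from
        ⟨0, h0, 0, 0, by simp⟩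
      symm := fun h => ftc_of_eq (ftc_neg h) (by abel)
      trans := fun h₁ h₂ => ftc_of_eq (ftc_add hP h₁ h₂) (by abel) }
  comp_left := by
    intro X Y Z f g g' h
    exact ftc_of_eq (ftc_comp_left f h) (by rw [Preadditive.comp_sub])
  comp_right := by
    intro X Y Z f f' g h
    exact ftc_of_eq (ftc_comp_right g h) (by rw [Preadditive.sub_comp])

instance : Congruence (stableRel {X : B | Injective X}) :=
  stableRel_congruence {X : B | Injective X} (show Injective (0 : B) from inferInstance)
    (fun {X Y} hX hY => by
      haveI : Injective X := hX
      haveI : Injective Y := hY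
      exact (inferInstance : Injective (X ⊞ Y)))

instance : Congruence (stableRel {X : B | Projective X}) :=
  stableRel_congruence {X : B | Projective X} (show Projective (0 : B) from inferInstance)
    (fun {X Y} hX hY => by
      haveI : Projective X := hX
      haveI : Projective Y := hY
      exact (inferInstance : Projective (X ⊞ Y)))

lemma ext1Zero_of_injective (X I : B) (hI : Injective I) : Ext1Zero X I := by
  intro E i p hses
  obtain ⟨w, hse⟩ := hses
  have : Injective (ShortComplex.mk i p w).X₁ := hI
  exact ⟨hse.splittingOfInjective.s, hse.splittingOfInjective.s_g⟩

/-- A bundle of the data needed for the construction in Statement 15. -/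
structure Setup (B : Type u) [Category.{v} B] [Abelian B] (C T F : Set B) where
  tau : StableCat {X : B | Projective X} ≌ StableCat {X : B | Injective X}
  hAR : ∀ M X : B, Ext1Zero M X ↔
      ∀ f : X ⟶ (tau.functor.obj ⟨M⟩).as, FactorsThroughClass {Y : B | Injective Y} f
  hct : IsCotorsionPair C T
  ht : IsTorsionPair T F

namespace Setup

variable {B : Type u} [Category.{v} B] [Abelian B] {C T F : Set B} (S : Setup B C T F)
include S

lemma mem_T_of_injective {I : B} (hI : Injective I) : I ∈ T := by
  rw [S.hct.right_eq]
  intro X _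
  exact ext1Zero_of_injective X I hI

lemma hom_zero_of_ftc {Z Y : B} (hY : Y ∈ F) {f : Z ⟶ Y}
    (h : FactorsThroughClass {X : B | Injective X} f) : f = 0 := by
  obtain ⟨I, hI, a, b, hab⟩ := h
  rw [← hab, S.ht.hom_zero (S.mem_T_of_injective hI) hY b, comp_zero]

/-- The data of a torsion-free replacement of `τ M` for `M ∈ C`. -/
structure PackD (S : Setup B C T F) (M : B) where
  N : B
  hN : N ∈ F
  q : (S.tau.functor.obj ⟨M⟩).as ⟶ N
  s : N ⟶ (S.tau.functor.obj ⟨M⟩).as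
  hsq : s ≫ q = 𝟙 N
  hqs : FactorsThroughClass {X : B | Injective X}
    (𝟙 ((S.tau.functor.obj ⟨M⟩).as) - q ≫ s)

lemma packD_nonempty {M : B} (hM : M ∈ C) : Nonempty (S.PackD M) := by
  obtain ⟨t, fN, i, p, htT, hfF, w, hse⟩ := S.ht.seq ((S.tau.functor.obj ⟨M⟩).as)
  have hC : ∀ Y ∈ T, Ext1Zero M Y := by
    have h := hM
    rw [S.hct.left_eq] at h
    exact h
  obtain ⟨I, hI, u, v, huv⟩ := (S.hAR M t).mp (hC t htT) i
  have : Injective I := hI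
  have : Mono i := hse.mono_f
  have : Epi p := hse.epi_g
  have hw' : i ≫ Injective.factorThru u i = u := Injective.comp_factorThru u i
  have hk : i ≫ (𝟙 _ - Injective.factorThru u i ≫ v) = 0 := by
    rw [comp_sub, comp_id, ← assoc, hw', huv, sub_self]
  have hs0 : p ≫ hse.exact.desc (𝟙 _ - Injective.factorThru u i ≫ v) hk
      = 𝟙 _ - Injective.factorThru u i ≫ v := hse.exact.g_desc _ hk
  have hvp : v ≫ p = 0 := S.ht.hom_zero (S.mem_T_of_injective hI) hfF (v ≫ p)
  have hsp : hse.exact.desc (𝟙 _ - Injective.factorThru u i ≫ v) hk ≫ p = 𝟙 fN := by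
    rw [← cancel_epi p, ← assoc, hs0, sub_comp, id_comp, assoc, hvp, comp_zero,
      sub_zero, comp_id]
  exact ⟨⟨fN, hfF, p, hse.exact.desc (𝟙 _ - Injective.factorThru u i ≫ v) hk, hsp,
    ⟨I, hI, Injective.factorThru u i, v, by rw [hs0]; abel⟩⟩⟩

/-- A choice of torsion-free replacement for every object of `C`. -/
noncomputable def pack (X : ObjectProperty.FullSubcategory (· ∈ C)) : S.PackD X.obj :=
  (S.packD_nonempty X.property).some

/-- A choice of a representative of `τ` applied to (the stable class of) a
morphism of `C`. -/
noncomputable def hrep {X Y : ObjectProperty.FullSubcategory (· ∈ C)} (f : X ⟶ Y) :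
    (S.tau.functor.obj ⟨X.obj⟩).as ⟶ (S.tau.functor.obj ⟨Y.obj⟩).as :=
  Quot.out (S.tau.functor.map
    ((Quotient.functor (stableRel {Z : B | Projective Z})).map (f.hom : X.obj ⟶ Y.obj)))

lemma hrep_spec {X Y : ObjectProperty.FullSubcategory (· ∈ C)} (f : X ⟶ Y) :
    (Quotient.functor (stableRel {Z : B | Injective Z})).map (S.hrep f)
      = S.tau.functor.map
        ((Quotient.functor (stableRel {Z : B | Projective Z})).map (f.hom : X.obj ⟶ Y.obj)) :=
  Quot.out_eq _

lemma map_congr {X Y : ObjectProperty.FullSubcategory (· ∈ C)}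
    {h h' : (S.tau.functor.obj ⟨X.obj⟩).as ⟶ (S.tau.functor.obj ⟨Y.obj⟩).as}
    (hh : FactorsThroughClass {Z : B | Injective Z} (h - h')) :
    (S.pack X).s ≫ h ≫ (S.pack Y).q = (S.pack X).s ≫ h' ≫ (S.pack Y).q := by
  obtain ⟨I, hI, a, b, hab⟩ := hh
  have hbq : b ≫ (S.pack Y).q = 0 := S.ht.hom_zero (S.mem_T_of_injective hI) (S.pack Y).hN (b ≫ (S.pack Y).q)
  have h1 : (h - h') ≫ (S.pack Y).q = 0 := by rw [← hab, assoc, hbq, comp_zero]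
  have h2 : h ≫ (S.pack Y).q = h' ≫ (S.pack Y).q := by
    rw [← sub_eq_zero, ← sub_comp]
    exact h1
  rw [h2]

lemma E0_map_eq {X Y : ObjectProperty.FullSubcategory (· ∈ C)} (f : X ⟶ Y)
    (h : (S.tau.functor.obj ⟨X.obj⟩).as ⟶ (S.tau.functor.obj ⟨Y.obj⟩).as)
    (hfh : S.tau.functor.map
        ((Quotient.functor (stableRel {Z : B | Projective Z})).map (f.hom : X.obj ⟶ Y.obj))
      = (Quotient.functor (stableRel {Z : B | Injective Z})).map h) :
    (S.pack X).s ≫ S.hrep f ≫ (S.pack Y).q = (S.pack X).s ≫ h ≫ (S.pack Y).q :=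
  S.map_congr ((Quotient.functor_map_eq_iff (stableRel {Z : B | Injective Z}) _ _).mp
    (by rw [S.hrep_spec]; exact hfh))

/-- The functor `C ⥤ F` sending `M` to the torsion-free part of `τ M`. -/
noncomputable def E0 : ObjectProperty.FullSubcategory (· ∈ C) ⥤ ObjectProperty.FullSubcategory (· ∈ F) where
  obj X := ⟨(S.pack X).N, (S.pack X).hN⟩
  map {X Y} f := ObjectProperty.homMk (show (S.pack X).N ⟶ (S.pack Y).N from (S.pack X).s ≫ S.hrep f ≫ (S.pack Y).q)
  map_id X := by
    apply ObjectProperty.hom_ext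
    show (S.pack X).s ≫ S.hrep (𝟙 X) ≫ (S.pack X).q = 𝟙 ((S.pack X).N)
    have h : (S.pack X).s ≫ S.hrep (𝟙 X) ≫ (S.pack X).q
        = (S.pack X).s ≫ 𝟙 _ ≫ (S.pack X).q := by
      refine S.E0_map_eq (𝟙 X) (𝟙 _) ?_
      have h1 : ((Quotient.functor (stableRel {Z : B | Projective Z})).map
          ((𝟙 X : X ⟶ X).hom : X.obj ⟶ X.obj)) = 𝟙 (⟨X.obj⟩ : StableCat {Z : B | Projective Z}) :=
        rfl
      rw [h1]
      exact S.tau.functor.map_id ⟨X.obj⟩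
    rw [h, id_comp, (S.pack X).hsq]
  map_comp {X Y Z} f g := by
    apply ObjectProperty.hom_ext
    show (S.pack X).s ≫ S.hrep (f ≫ g) ≫ (S.pack Z).q
      = ((S.pack X).s ≫ S.hrep f ≫ (S.pack Y).q) ≫ ((S.pack Y).s ≫ S.hrep g ≫ (S.pack Z).q)
    have h : (S.pack X).s ≫ S.hrep (f ≫ g) ≫ (S.pack Z).q
        = (S.pack X).s ≫ (S.hrep f ≫ S.hrep g) ≫ (S.pack Z).q := by
      refine S.E0_map_eq (f ≫ g) (S.hrep f ≫ S.hrep g) ?_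
      have h1 : ((Quotient.functor (stableRel {Z : B | Projective Z})).map
            ((f ≫ g : X ⟶ Z).hom : X.obj ⟶ Z.obj))
          = (Quotient.functor (stableRel {Z : B | Projective Z})).map (f.hom : X.obj ⟶ Y.obj)
            ≫ (Quotient.functor (stableRel {Z : B | Projective Z})).map (g.hom : Y.obj ⟶ Z.obj) :=
        rfl
      calc S.tau.functor.map ((Quotient.functor (stableRel {Z : B | Projective Z})).map
            ((f ≫ g : X ⟶ Z).hom : X.obj ⟶ Z.obj))
          = S.tau.functor.map ((Quotient.functor (stableRel {Z : B | Projective Z})).map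
              (f.hom : X.obj ⟶ Y.obj))
            ≫ S.tau.functor.map ((Quotient.functor (stableRel {Z : B | Projective Z})).map
              (g.hom : Y.obj ⟶ Z.obj)) := by
            rw [h1, CategoryTheory.Functor.map_comp]
        _ = (Quotient.functor (stableRel {Z : B | Injective Z})).map (S.hrep f)
            ≫ (Quotient.functor (stableRel {Z : B | Injective Z})).map (S.hrep g) := by
            rw [S.hrep_spec, S.hrep_spec]
        _ = (Quotient.functor (stableRel {Z : B | Injective Z})).map
              (S.hrep f ≫ S.hrep g) := by
            rw [CategoryTheory.Functor.map_comp]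
    rw [h]
    obtain ⟨I, hI, a, b, hab⟩ := (S.pack Y).hqs
    have hb0 : b ≫ S.hrep g ≫ (S.pack Z).q = 0 :=
      S.ht.hom_zero (S.mem_T_of_injective hI) (S.pack Z).hN (b ≫ S.hrep g ≫ (S.pack Z).q)
    have hqs2 : (S.pack Y).q ≫ (S.pack Y).s = 𝟙 _ - a ≫ b := by
      rw [hab]; abel
    have e1 : ((S.pack X).s ≫ S.hrep f ≫ (S.pack Y).q)
          ≫ ((S.pack Y).s ≫ S.hrep g ≫ (S.pack Z).q)
        = (S.pack X).s ≫ S.hrep f ≫ ((S.pack Y).q ≫ (S.pack Y).s)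
          ≫ S.hrep g ≫ (S.pack Z).q := by
      simp only [assoc]
    rw [e1, hqs2]
    simp only [sub_comp, comp_sub, id_comp, assoc, hb0, comp_zero, sub_zero]

/-- The induced functor on the additive quotient `C/proj`. -/
noncomputable def eFun : AddQuot C {X : B | Projective X} ⥤ ObjectProperty.FullSubcategory (· ∈ F) :=
  CategoryTheory.Quotient.lift _ S.E0 (fun x y f g h => by
    apply ObjectProperty.hom_ext
    show (S.pack x).s ≫ S.hrep f ≫ (S.pack y).q = (S.pack x).s ≫ S.hrep g ≫ (S.pack y).q
    have h1 : (Quotient.functor (stableRel {Z : B | Projective Z})).map (f.hom : x.obj ⟶ y.obj)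
        = (Quotient.functor (stableRel {Z : B | Projective Z})).map (g.hom : x.obj ⟶ y.obj) :=
      CategoryTheory.Quotient.sound _ h
    exact S.E0_map_eq f (S.hrep g) (by rw [h1, S.hrep_spec]))

lemma eFun_map_mk {X Y : ObjectProperty.FullSubcategory (· ∈ C)} (f : X ⟶ Y) :
    (S.eFun.map ((Quotient.functor (quotRel C {X : B | Projective X})).map f)).hom
      = (S.pack X).s ≫ S.hrep f ≫ (S.pack Y).q := rfl

/-- The stable isomorphism between the torsion-free replacement and `τ M`. -/
noncomputable def pack_iso (X : ObjectProperty.FullSubcategory (· ∈ C)) :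
    (⟨(S.pack X).N⟩ : StableCat {Z : B | Injective Z}) ≅ S.tau.functor.obj ⟨X.obj⟩ where
  hom := (Quotient.functor (stableRel {Z : B | Injective Z})).map (S.pack X).s
  inv := (Quotient.functor (stableRel {Z : B | Injective Z})).map (S.pack X).q
  hom_inv_id := by
    rw [← CategoryTheory.Functor.map_comp, (S.pack X).hsq, CategoryTheory.Functor.map_id]
    rfl
  inv_hom_id := by
    rw [← CategoryTheory.Functor.map_comp]
    have h : (Quotient.functor (stableRel {Z : B | Injective Z})).map
          ((S.pack X).q ≫ (S.pack X).s)
        = (Quotient.functor (stableRel {Z : B | Injective Z})).map (𝟙 _) :=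
      CategoryTheory.Quotient.sound _ (ftc_of_eq (ftc_neg (S.pack X).hqs) (by abel))
    rw [h, CategoryTheory.Functor.map_id]
    rfl

lemma iso_of_stableIso {N₁ N₂ : B} (h₁ : N₁ ∈ F) (h₂ : N₂ ∈ F)
    (φ : (⟨N₁⟩ : StableCat {Z : B | Injective Z}) ≅ (⟨N₂⟩ : StableCat {Z : B | Injective Z})) :
    ∃ (r₁ : N₁ ⟶ N₂) (r₂ : N₂ ⟶ N₁), r₁ ≫ r₂ = 𝟙 N₁ ∧ r₂ ≫ r₁ = 𝟙 N₂ := by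
  obtain ⟨r₁, hr₁⟩ := (Quotient.functor (stableRel {Z : B | Injective Z})).map_surjective φ.hom
  obtain ⟨r₂, hr₂⟩ := (Quotient.functor (stableRel {Z : B | Injective Z})).map_surjective φ.inv
  have e₁ : (Quotient.functor (stableRel {Z : B | Injective Z})).map (r₁ ≫ r₂)
      = (Quotient.functor (stableRel {Z : B | Injective Z})).map (𝟙 N₁) := by
    rw [CategoryTheory.Functor.map_comp, hr₁, hr₂, φ.hom_inv_id, CategoryTheory.Functor.map_id]
    rfl
  have e₂ : (Quotient.functor (stableRel {Z : B | Injective Z})).map (r₂ ≫ r₁)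
      = (Quotient.functor (stableRel {Z : B | Injective Z})).map (𝟙 N₂) := by
    rw [CategoryTheory.Functor.map_comp, hr₁, hr₂, φ.inv_hom_id, CategoryTheory.Functor.map_id]
    rfl
  have g₁ := (Quotient.functor_map_eq_iff (stableRel {Z : B | Injective Z}) _ _).mp e₁
  have g₂ := (Quotient.functor_map_eq_iff (stableRel {Z : B | Injective Z}) _ _).mp e₂
  refine ⟨r₁, r₂, ?_, ?_⟩
  · rw [← sub_eq_zero]; exact S.hom_zero_of_ftc h₁ g₁
  · rw [← sub_eq_zero]; exact S.hom_zero_of_ftc h₂ g₂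

lemma eFun_faithful : S.eFun.Faithful where
  map_injective {Xq Yq} {fq gq} h := by
    obtain ⟨f, rfl⟩ := Quot.exists_rep fq
    obtain ⟨g, rfl⟩ := Quot.exists_rep gq
    have h' : (S.pack Xq.as).s ≫ S.hrep f ≫ (S.pack Yq.as).q
        = (S.pack Xq.as).s ≫ S.hrep g ≫ (S.pack Yq.as).q := congrArg (fun k => k.hom) h
    set d := S.hrep f - S.hrep g with hd
    have h0 : (S.pack Xq.as).s ≫ d ≫ (S.pack Yq.as).q = 0 := by
      rw [hd, sub_comp, comp_sub, h', sub_self]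
    obtain ⟨I₁, hI₁, a₁, b₁, hab₁⟩ := (S.pack Xq.as).hqs
    obtain ⟨I₂, hI₂, a₂, b₂, hab₂⟩ := (S.pack Yq.as).hqs
    have t3 : (S.pack Xq.as).q ≫ (S.pack Xq.as).s ≫ d ≫ (S.pack Yq.as).q
        ≫ (S.pack Yq.as).s = 0 := by
      rw [reassoc_of% h0, zero_comp, comp_zero]
    have key : d = (𝟙 _ - (S.pack Xq.as).q ≫ (S.pack Xq.as).s) ≫ d
        + ((S.pack Xq.as).q ≫ (S.pack Xq.as).s ≫ d)
          ≫ (𝟙 _ - (S.pack Yq.as).q ≫ (S.pack Yq.as).s) := by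
      simp only [sub_comp, comp_sub, id_comp, comp_id, assoc, t3, sub_zero]
      abel
    have F1 : FactorsThroughClass {Z : B | Injective Z}
        ((𝟙 _ - (S.pack Xq.as).q ≫ (S.pack Xq.as).s) ≫ d) :=
      ftc_comp_right d (S.pack Xq.as).hqs
    have F2 : FactorsThroughClass {Z : B | Injective Z}
        (((S.pack Xq.as).q ≫ (S.pack Xq.as).s ≫ d)
          ≫ (𝟙 _ - (S.pack Yq.as).q ≫ (S.pack Yq.as).s)) :=
      ftc_comp_left _ (S.pack Yq.as).hqs
    have Fd : FactorsThroughClass {Z : B | Injective Z} (S.hrep f - S.hrep g) :=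
      ftc_of_eq (ftc_add (fun {X Y} hX hY => by
        haveI : Injective X := hX
        haveI : Injective Y := hY
        exact (inferInstance : Injective (X ⊞ Y))) F1 F2) key.symm
    have e1 : (Quotient.functor (stableRel {Z : B | Injective Z})).map (S.hrep f)
        = (Quotient.functor (stableRel {Z : B | Injective Z})).map (S.hrep g) :=
      CategoryTheory.Quotient.sound _ Fd
    rw [S.hrep_spec, S.hrep_spec] at e1
    have e2 := S.tau.functor.map_injective e1
    have e3 := (Quotient.functor_map_eq_iff (stableRel {Z : B | Projective Z}) _ _).mp e2
    exact CategoryTheory.Quotient.sound _ e3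

lemma eFun_full : S.eFun.Full where
  map_surjective {Xq Yq} g := by
    obtain ⟨X⟩ := Xq
    obtain ⟨Y⟩ := Yq
    let gB : (S.pack X).N ⟶ (S.pack Y).N := g.hom
    let γ : S.tau.functor.obj ⟨X.obj⟩ ⟶ S.tau.functor.obj ⟨Y.obj⟩ :=
      (Quotient.functor (stableRel {Z : B | Injective Z})).map
        ((S.pack X).q ≫ gB ≫ (S.pack Y).s)
    obtain ⟨δ, hδ⟩ := S.tau.functor.map_surjective γ
    obtain ⟨f0, hf0⟩ := (Quotient.functor (stableRel {Z : B | Projective Z})).map_surjective δ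
    refine ⟨(Quotient.functor (quotRel C {Z : B | Projective Z})).map (ObjectProperty.homMk f0 : X ⟶ Y), ?_⟩
    have h := S.E0_map_eq (X := X) (Y := Y) (ObjectProperty.homMk f0 : X ⟶ Y)
      ((S.pack X).q ≫ gB ≫ (S.pack Y).s)
      (by rw [show (ObjectProperty.homMk f0 : X ⟶ Y).hom = f0 from rfl, hf0, hδ])
    have e1 : (S.pack X).s ≫ ((S.pack X).q ≫ gB ≫ (S.pack Y).s) ≫ (S.pack Y).q
        = ((S.pack X).s ≫ (S.pack X).q) ≫ gB ≫ ((S.pack Y).s ≫ (S.pack Y).q) := by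
      simp only [assoc]
    apply ObjectProperty.hom_ext
    show (S.pack X).s ≫ S.hrep (ObjectProperty.homMk f0 : X ⟶ Y) ≫ (S.pack Y).q = gB
    rw [h, e1, (S.pack X).hsq, (S.pack Y).hsq, id_comp, comp_id]

lemma eFun_essSurj : S.eFun.EssSurj where
  mem_essImage Yq := by
    obtain ⟨N, hN⟩ := Yq
    let c : S.tau.functor.obj ⟨(S.tau.inverse.obj ⟨N⟩).as⟩
        ≅ (⟨N⟩ : StableCat {Z : B | Injective Z}) := S.tau.counitIso.app ⟨N⟩
    obtain ⟨u, hu⟩ := (Quotient.functor (stableRel {Z : B | Injective Z})).map_surjective c.hom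
    obtain ⟨v, hv⟩ := (Quotient.functor (stableRel {Z : B | Injective Z})).map_surjective c.inv
    have huv : FactorsThroughClass {Z : B | Injective Z} (u ≫ v - 𝟙 _) :=
      (Quotient.functor_map_eq_iff (stableRel {Z : B | Injective Z}) _ _).mp
        (by rw [CategoryTheory.Functor.map_comp, hu, hv, c.hom_inv_id,
          CategoryTheory.Functor.map_id]; rfl)
    have hM : (S.tau.inverse.obj ⟨N⟩).as ∈ C := by
      refine (Set.ext_iff.mp S.hct.left_eq _).mpr ?_
      intro Z hZ
      rw [S.hAR]
      intro f
      obtain ⟨I, hI, a, b, hab⟩ := huv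
      have hfu : (f ≫ u) ≫ v = 0 := by
        rw [S.ht.hom_zero hZ hN (f ≫ u), zero_comp]
      refine ⟨I, hI, f ≫ a, -b, ?_⟩
      have h1 : f ≫ (u ≫ v - 𝟙 _) = -f := by
        rw [comp_sub, ← assoc, hfu, comp_id, zero_sub]
      calc (f ≫ a) ≫ (-b) = -(f ≫ a ≫ b) := by rw [comp_neg, assoc]
        _ = -(f ≫ (u ≫ v - 𝟙 _)) := by rw [hab]
        _ = f := by rw [h1, neg_neg]
    refine ⟨(Quotient.functor (quotRel C {Z : B | Projective Z})).obj
      ⟨(S.tau.inverse.obj ⟨N⟩).as, hM⟩, ?_⟩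
    obtain ⟨r₁, r₂, hr₁₂, hr₂₁⟩ := S.iso_of_stableIso
      (S.pack ⟨(S.tau.inverse.obj ⟨N⟩).as, hM⟩).hN hN
      ((S.pack_iso ⟨(S.tau.inverse.obj ⟨N⟩).as, hM⟩).trans c)
    exact ⟨⟨ObjectProperty.homMk r₁, ObjectProperty.homMk r₂, by ext; exact hr₁₂,
        by ext; exact hr₂₁⟩⟩

end Setup

end Aux

/-- Let `Λ` be an Artin algebra (over a commutative artinian ring
`R`) and `(C, T, F)` a cotorsion torsion triple in `mod Λ`.  Given the
Auslander–Reiten translation `τ`, an equivalence from the projectively stable to the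
injectively stable category of `mod Λ` satisfying Auslander–Reiten duality (in the
form: `Ext¹(M, X) = 0` iff every map `X ⟶ τM` factors through an injective), `τ`
induces an equivalence from the additive quotient `C/(proj Λ)` to `F`. -/
theorem statement15 (R : Type u) [CommRing R] [IsArtinianRing R]
    (L : Type u) [Ring L] [Algebra R L] [Module.Finite R L]
    [Abelian (ModF L)]
    (tau : StableCat {X : ModF L | Projective X} ≌ StableCat {X : ModF L | Injective X})
    (hAR : ∀ M X : ModF L, Ext1Zero M X ↔
      ∀ f : X ⟶ (tau.functor.obj ⟨M⟩).as,
        FactorsThroughClass {Y : ModF L | Injective Y} f)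
    {C T F : Set (ModF L)} (hct : IsCotorsionPair C T) (ht : IsTorsionPair T F) :
    ∃ e : AddQuot C {X : ModF L | Projective X} ⥤ ObjectProperty.FullSubcategory (· ∈ F),
      e.IsEquivalence ∧
      ∀ (X : ModF L) (hX : X ∈ C),
        Nonempty ((⟨(e.obj ((Quotient.functor
            (quotRel C {X : ModF L | Projective X})).obj ⟨X, hX⟩)).obj⟩ :
          StableCat {X : ModF L | Injective X}) ≅ tau.functor.obj ⟨X⟩) := by
  classical
  let S : Setup (ModF L) C T F := ⟨tau, hAR, hct, ht⟩
  refine ⟨S.eFun, ⟨S.eFun_faithful, S.eFun_full, S.eFun_essSurj⟩, ?_⟩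
  intro X hX
  exact ⟨S.pack_iso ⟨X, hX⟩⟩

end Paper
end
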